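/- The function g(c) = Γ(1 − 2/c)/Γ(1 − 1/c)² − 1 is strictly decreasing in c on (2, ∞) and tends to 0 as c → ∞. -/

import Mathlib

open Filter Topology

lemma aux_strictConvexOn_log_Gamma :
    StrictConvexOn ℝ (Set.Ioi 0) (Real.log ∘ Real.Gamma) := by
  have g1 : ConvexOn ℝ (Set.Ioi 0) (fun x : ℝ => Real.log (Real.Gamma (x + 1))) := by
    refine ⟨convex_Ioi 0, fun x hx y hy a b ha hb hab => ?_⟩
    have hx1 : x + 1 ∈ Set.Ioi (0:ℝ) := by
      simp only [Set.mem_Ioi] at hx ⊢; linarith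
    have hy1 : y + 1 ∈ Set.Ioi (0:ℝ) := by
      simp only [Set.mem_Ioi] at hy ⊢; linarith
    have := Real.convexOn_log_Gamma.2 hx1 hy1 ha hb hab
    simp only [Function.comp_apply, smul_eq_mul] at this ⊢
    have heq : a * x + b * y + 1 = a * (x + 1) + b * (y + 1) := by linarith [hab]
    rw [heq]; exact this
  have g2 : StrictConvexOn ℝ (Set.Ioi 0) (fun x : ℝ => -Real.log x) :=
    strictConcaveOn_log_Ioi.neg
  have g3 : StrictConvexOn ℝ (Set.Ioi 0)
      (fun x : ℝ => Real.log (Real.Gamma (x + 1)) + -Real.log x) :=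
    g1.add_strictConvexOn g2
  have key : ∀ x ∈ Set.Ioi (0:ℝ),
      Real.log (Real.Gamma x) = Real.log (Real.Gamma (x + 1)) + -Real.log x := by
    intro x hx
    have hx0 : (0:ℝ) < x := hx
    rw [Real.Gamma_add_one hx0.ne', Real.log_mul hx0.ne' (Real.Gamma_pos_of_pos hx0).ne']
    ring
  refine ⟨convex_Ioi 0, fun x hx y hy hxy a b ha hb hab => ?_⟩
  have hmem : a • x + b • y ∈ Set.Ioi (0:ℝ) :=
    (convex_Ioi (0:ℝ)) hx hy ha.le hb.le hab
  have := g3.2 hx hy hxy ha hb hab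
  simp only [Function.comp_apply, smul_eq_mul] at *
  rw [key x hx, key y hy, key _ hmem]
  exact this

lemma aux_combo {f : ℝ → ℝ} (hf : StrictConvexOn ℝ (Set.Ioi 0) f)
    {a b c d : ℝ} (ha : 0 < a) (hab : a < b) (hbd : b < d) (hac : a < c) (hcd : c < d)
    (hsum : b + 2 * c = a + 2 * d) :
    f b + 2 * f c < f a + 2 * f d := by
  have had : a < d := hab.trans hbd
  have hda : (0:ℝ) < d - a := by linarith
  have hd0 : (0:ℝ) < d := ha.trans had
  set l1 : ℝ := (d - b) / (d - a) with hl1def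
  set l2 : ℝ := (d - c) / (d - a) with hl2def
  have hl1 : 0 < l1 := div_pos (by linarith) hda
  have hl1' : l1 < 1 := (div_lt_one hda).2 (by linarith)
  have hl2 : 0 < l2 := div_pos (by linarith) hda
  have hl2' : l2 < 1 := (div_lt_one hda).2 (by linarith)
  have hsum12 : l1 + 2 * l2 = 1 := by
    rw [hl1def, hl2def]
    field_simp
    linarith
  have hb : l1 • a + (1 - l1) • d = b := by
    simp only [smul_eq_mul, hl1def]
    field_simp
    ring
  have hc : l2 • a + (1 - l2) • d = c := by
    simp only [smul_eq_mul, hl2def]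
    field_simp
    ring
  have h1 : f b < l1 * f a + (1 - l1) * f d := by
    have := hf.2 (Set.mem_Ioi.2 ha) (Set.mem_Ioi.2 hd0) had.ne
      (show (0:ℝ) < l1 from hl1) (show (0:ℝ) < 1 - l1 by linarith)
      (show l1 + (1 - l1) = 1 by ring)
    rw [hb] at this
    simpa [smul_eq_mul] using this
  have h2 : f c < l2 * f a + (1 - l2) * f d := by
    have := hf.2 (Set.mem_Ioi.2 ha) (Set.mem_Ioi.2 hd0) had.ne
      (show (0:ℝ) < l2 from hl2) (show (0:ℝ) < 1 - l2 by linarith)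
      (show l2 + (1 - l2) = 1 by ring)
    rw [hc] at this
    simpa [smul_eq_mul] using this
  have h3 := add_lt_add h1 (by linarith : 2 * f c < 2 * (l2 * f a + (1 - l2) * f d))
  have h4 : l1 * f a + (1 - l1) * f d + 2 * (l2 * f a + (1 - l2) * f d) =
      (l1 + 2 * l2) * f a + (3 - (l1 + 2 * l2)) * f d := by ring
  rw [h4, hsum12] at h3
  linarith

/-- `g(c) = Γ(1 − 2/c)/Γ(1 − 1/c)² − 1` is strictly decreasing on `(2, ∞)` and tends
to `0` as `c → ∞`. -/
theorem iw_cv_strictAnti_tendsto_zero :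
    StrictAntiOn (fun c : ℝ => Real.Gamma (1 - 2 / c) / (Real.Gamma (1 - 1 / c)) ^ 2 - 1)
        (Set.Ioi (2 : ℝ)) ∧
      Tendsto (fun c : ℝ => Real.Gamma (1 - 2 / c) / (Real.Gamma (1 - 1 / c)) ^ 2 - 1)
        atTop (𝓝 0) := by
  constructor
  · intro c₁ hc₁ c₂ hc₂ h12
    simp only [Set.mem_Ioi] at hc₁ hc₂
    have hc₁0 : (0:ℝ) < c₁ := by linarith
    have hc₂0 : (0:ℝ) < c₂ := by linarith
    -- a = 1 - 2/c₁, b = 1 - 2/c₂, c = 1 - 1/c₁, d = 1 - 1/c₂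
    have ha : (0:ℝ) < 1 - 2 / c₁ := by
      rw [sub_pos, div_lt_one hc₁0]; linarith
    have hb : (0:ℝ) < 1 - 2 / c₂ := by
      rw [sub_pos, div_lt_one hc₂0]; linarith
    have hcc : (0:ℝ) < 1 - 1 / c₁ := by
      rw [sub_pos, div_lt_one hc₁0]; linarith
    have hd : (0:ℝ) < 1 - 1 / c₂ := by
      rw [sub_pos, div_lt_one hc₂0]; linarith
    have hinv : 1 / c₂ < 1 / c₁ := by
      apply div_lt_div_of_pos_left one_pos hc₁0 h12
    have habs : 1 - 2 / c₁ < 1 - 2 / c₂ := by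
      have : 2 / c₂ < 2 / c₁ := by
        apply div_lt_div_of_pos_left (by norm_num) hc₁0 h12
      linarith
    have hbd : 1 - 2 / c₂ < 1 - 1 / c₂ := by
      have : 1 / c₂ < 2 / c₂ := by
        apply div_lt_div_of_pos_right (by norm_num) hc₂0
      linarith
    have hac : 1 - 2 / c₁ < 1 - 1 / c₁ := by
      have : 1 / c₁ < 2 / c₁ := by
        apply div_lt_div_of_pos_right (by norm_num) hc₁0
      linarith
    have hcd : 1 - 1 / c₁ < 1 - 1 / c₂ := by linarith
    have hsum : (1 - 2 / c₂) + 2 * (1 - 1 / c₁) = (1 - 2 / c₁) + 2 * (1 - 1 / c₂) := by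
      ring
    have hlog := aux_combo aux_strictConvexOn_log_Gamma ha habs hbd hac hcd hsum
    simp only [Function.comp_apply] at hlog
    -- translate log inequality to ratio inequality
    have hΓb := Real.Gamma_pos_of_pos hb
    have hΓa := Real.Gamma_pos_of_pos ha
    have hΓc := Real.Gamma_pos_of_pos hcc
    have hΓd := Real.Gamma_pos_of_pos hd
    have hratio : Real.Gamma (1 - 2 / c₂) / Real.Gamma (1 - 1 / c₂) ^ 2 <
        Real.Gamma (1 - 2 / c₁) / Real.Gamma (1 - 1 / c₁) ^ 2 := by
      rw [← Real.log_lt_log_iff (by positivity) (by positivity),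
        Real.log_div hΓb.ne' (by positivity), Real.log_div hΓa.ne' (by positivity),
        Real.log_pow, Real.log_pow]
      push_cast
      linarith
    simpa using sub_lt_sub_right hratio 1
  · have h2' : Tendsto (fun c : ℝ => 2 / c) atTop (𝓝 0) :=
      Tendsto.div_atTop tendsto_const_nhds tendsto_id
    have h2 : Tendsto (fun c : ℝ => 1 - 2 / c) atTop (𝓝 (1 - 0)) :=
      tendsto_const_nhds.sub h2'
    rw [sub_zero] at h2
    have h1' : Tendsto (fun c : ℝ => 1 / c) atTop (𝓝 0) :=
      Tendsto.div_atTop tendsto_const_nhds tendsto_id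
    have h1 : Tendsto (fun c : ℝ => 1 - 1 / c) atTop (𝓝 (1 - 0)) :=
      tendsto_const_nhds.sub h1'
    rw [sub_zero] at h1
    have hcont : ContinuousAt Real.Gamma 1 := by
      refine (Real.differentiableAt_Gamma ?_).continuousAt
      intro m
      have hm : -(m:ℝ) ≤ 0 := neg_nonpos.2 (Nat.cast_nonneg m)
      intro h
      rw [← h] at hm
      linarith
    have hnum : Tendsto (fun c : ℝ => Real.Gamma (1 - 2 / c)) atTop (𝓝 1) := by
      have := hcont.tendsto.comp h2
      simpa [Real.Gamma_one, Function.comp_def] using this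
    have hden : Tendsto (fun c : ℝ => (Real.Gamma (1 - 1 / c)) ^ 2) atTop (𝓝 1) := by
      have := (hcont.tendsto.comp h1).pow 2
      simpa [Real.Gamma_one] using this
    have := (hnum.div hden (by norm_num)).sub_const 1
    simpa using this
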